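/- Let J be the symmetric 3×3 Jacobian of the star-shaped network with M = 3, i.e. J_{ik} = Σ_{j=1}^{3} β_j φ_{ij} φ_{kj} − γ·δ_{ik}, and assume 0 < β0 < γ and ζ·β0 > γ. (i) If moreover ζ < 1 + 3(1−R0)/R0, φ0 ∈ (0, 1/2] and |φ0 − 1/3| > φ̃3, then J has a positive eigenvalue. (ii) If instead ζ ≥ 1 + 3(1−R0)/R0, then for every φ0 ∈ (0, 1/2], J has a nonnegative eigenvalue. -/

import Mathlib

open Matrix

/-- Flux matrix of the star-shaped network with `M = 3`. -/
noncomputable def starFlux3 (φ0 : ℝ) : Matrix (Fin 3) (Fin 3) ℝ :=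
  !![1 - φ0, 0, φ0; 0, 1 - φ0, φ0; φ0, φ0, 1 - 2 * φ0]

/-- Infection rates: `β₁ = β₂ = β0`, `β₃ = ζ·β0`. -/
noncomputable def starBeta3 (β0 ζ : ℝ) : Fin 3 → ℝ := ![β0, β0, ζ * β0]

/-- Jacobian of the infected subsystem at the disease-free equilibrium:
`J_{ik} = Σ_j β_j φ_{ij} φ_{kj} − γ·δ_{ik}`. -/
noncomputable def starJac3 (β0 ζ γ φ0 : ℝ) : Matrix (Fin 3) (Fin 3) ℝ :=
  Matrix.of fun i k =>
    (∑ j, starBeta3 β0 ζ j * starFlux3 φ0 i j * starFlux3 φ0 k j)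
      - γ * (if i = k then 1 else 0)

set_option maxHeartbeats 1000000

lemma star3_spec (β0 ζ γ φ0 : ℝ) :
    (((β0*(1-φ0)^2 + 2*ζ*β0*φ0^2 - γ) + (2*β0*φ0^2 + ζ*β0*(1-2*φ0)^2 - γ))
      + Real.sqrt (((β0*(1-φ0)^2 + 2*ζ*β0*φ0^2 - γ) - (2*β0*φ0^2 + ζ*β0*(1-2*φ0)^2 - γ))^2
          + 8*(β0*(1-φ0)*φ0 + ζ*β0*φ0*(1-2*φ0))^2))/2
    ∈ spectrum ℝ (starJac3 β0 ζ γ φ0) := by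
  set S : ℝ := β0*(1-φ0)^2 + 2*ζ*β0*φ0^2 - γ with hS
  set D : ℝ := 2*β0*φ0^2 + ζ*β0*(1-2*φ0)^2 - γ with hD
  set C : ℝ := β0*(1-φ0)*φ0 + ζ*β0*φ0*(1-2*φ0) with hC
  set s : ℝ := Real.sqrt ((S - D)^2 + 8*C^2) with hs
  have hs2 : s^2 = (S - D)^2 + 8*C^2 := Real.sq_sqrt (by positivity)
  rw [spectrum.mem_iff]
  intro h
  rw [Matrix.isUnit_iff_isUnit_det] at h
  rw [isUnit_iff_ne_zero] at h
  apply h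
  rw [Matrix.det_fin_three]
  simp only [starJac3, starFlux3, starBeta3, Matrix.algebraMap_matrix_apply,
    Matrix.sub_apply, Matrix.of_apply, Fin.sum_univ_three, Matrix.cons_val',
    Matrix.cons_val_zero, Matrix.cons_val_one, Matrix.head_cons, Matrix.head_fin_const,
    Matrix.empty_val', Matrix.cons_val_fin_one, Matrix.cons_val_two, Matrix.tail_cons]
  norm_num [Fin.ext_iff]
  linear_combination (((S + D + s)/2 - (β0*(1-φ0)^2 + ζ*β0*φ0^2 - γ) + ζ*β0*φ0^2)/4) * hs2

lemma mu_nonneg {S D C : ℝ} (h : S*D - 2*C^2 ≤ 0) :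
    0 ≤ ((S + D) + Real.sqrt ((S-D)^2 + 8*C^2))/2 := by
  have hs0 := Real.sqrt_nonneg ((S-D)^2 + 8*C^2)
  have hs2 : Real.sqrt ((S-D)^2+8*C^2)^2 = (S-D)^2+8*C^2 := Real.sq_sqrt (by positivity)
  nlinarith [sq_nonneg (S + D + Real.sqrt ((S-D)^2 + 8*C^2))]

lemma mu_pos {S D C : ℝ} (h : S*D - 2*C^2 < 0) :
    0 < ((S + D) + Real.sqrt ((S-D)^2 + 8*C^2))/2 := by
  have hs0 := Real.sqrt_nonneg ((S-D)^2 + 8*C^2)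
  have hs2 : Real.sqrt ((S-D)^2+8*C^2)^2 = (S-D)^2+8*C^2 := Real.sq_sqrt (by positivity)
  nlinarith [sq_nonneg (S + D + Real.sqrt ((S-D)^2 + 8*C^2))]

theorem star3_DFE_unstable (β0 γ ζ : ℝ)
    (hβ0 : 0 < β0) (hβγ : β0 < γ) (hζβ : γ < ζ * β0) :
    -- (i) below the critical ζ, flux values away from the stability interval
    -- yield a positive eigenvalue
    (∀ φ0 : ℝ, ζ < 1 + 3 * (1 - β0 / γ) / (β0 / γ) →
      0 < φ0 → φ0 ≤ 1 / 2 →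
      (1 / 3) * Real.sqrt ((3 * (1 - β0 / γ) - (β0 / γ) * (ζ - 1)) /
        ((β0 / γ) * (3 * ζ * (1 - β0 / γ) - (ζ - 1)))) < |φ0 - 1 / 3| →
      ∃ μ ∈ spectrum ℝ (starJac3 β0 ζ γ φ0), 0 < μ) ∧
    -- (ii) at or above the critical ζ, every flux value yields a nonnegative
    -- eigenvalue
    (1 + 3 * (1 - β0 / γ) / (β0 / γ) ≤ ζ →
      ∀ φ0 : ℝ, 0 < φ0 → φ0 ≤ 1 / 2 →
      ∃ μ ∈ spectrum ℝ (starJac3 β0 ζ γ φ0), 0 ≤ μ) := by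
  have hγ : 0 < γ := hβ0.trans hβγ
  have hγ0 : γ ≠ 0 := ne_of_gt hγ
  have hβ0' : β0 ≠ 0 := ne_of_gt hβ0
  have hζ0 : 0 < ζ := by nlinarith
  have e : 1 + 3 * (1 - β0 / γ) / (β0 / γ) = (3*γ - 2*β0)/β0 := by
    field_simp
    ring
  constructor
  · -- part (i)
    intro φ0 hz hp0 hp2 hrad
    have hX : β0 * ζ < 3*γ - 2*β0 := by
      rw [e, lt_div_iff₀ hβ0] at hz
      linarith [hz]
    have hL : 3*β0*ζ - γ - 2*γ*ζ < 0 := by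
      rcases le_or_gt (2*γ) (3*β0) with h | h
      · nlinarith [mul_nonneg (by linarith : (0:ℝ) ≤ 3*β0 - 2*γ)
          (by linarith : (0:ℝ) ≤ 3*γ - 2*β0 - β0*ζ), sq_nonneg (γ - β0)]
      · nlinarith [mul_pos hζ0 (by linarith : (0:ℝ) < 2*γ - 3*β0)]
    have hden : (0:ℝ) < β0*(γ + 2*γ*ζ - 3*β0*ζ) := by nlinarith
    have hB : (β0/γ)*(3*ζ*(1-β0/γ) - (ζ-1)) = (β0*(γ+2*γ*ζ-3*β0*ζ))/γ^2 := by
      field_simp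
      ring
    have hb : (β0/γ)*(3*ζ*(1-β0/γ) - (ζ-1)) ≠ 0 := by
      rw [hB]
      exact ne_of_gt (div_pos hden (by positivity))
    have hq : (3 * (1 - β0 / γ) - (β0 / γ) * (ζ - 1)) /
        ((β0 / γ) * (3 * ζ * (1 - β0 / γ) - (ζ - 1)))
        = (γ*(3*γ - 2*β0 - β0*ζ))/(β0*(γ + 2*γ*ζ - 3*β0*ζ)) := by
      rw [div_eq_div_iff hb (ne_of_gt hden)]
      field_simp
      ring
    rw [hq] at hrad
    have hq0 : 0 ≤ γ*(3*γ-2*β0-β0*ζ)/(β0*(γ+2*γ*ζ-3*β0*ζ)) :=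
      div_nonneg (by nlinarith) (le_of_lt hden)
    have h2 : ((1/3)*Real.sqrt (γ*(3*γ-2*β0-β0*ζ)/(β0*(γ+2*γ*ζ-3*β0*ζ))))^2
        < |φ0-1/3|^2 := by
      apply pow_lt_pow_left₀ hrad (by positivity)
      norm_num
    rw [mul_pow, Real.sq_sqrt hq0, sq_abs] at h2
    have h1 : γ*(3*γ-2*β0-β0*ζ)/(β0*(γ+2*γ*ζ-3*β0*ζ))/9 < (φ0-1/3)^2 := by
      nlinarith [h2]
    have hL3 : 3*β0*(3*β0*ζ-γ-2*γ*ζ) < 0 := by nlinarith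
    have h3 := mul_lt_mul_of_neg_left h1 hL3
    have h4 : (3*β0*(3*β0*ζ-γ-2*γ*ζ)) * (γ*(3*γ-2*β0-β0*ζ)/(β0*(γ+2*γ*ζ-3*β0*ζ))/9)
        = -(γ*(3*γ-2*β0-β0*ζ))/3 := by
      have hden' : β0*(γ + 2*γ*ζ - 3*β0*ζ) ≠ 0 := ne_of_gt hden
      rw [div_div, mul_div_assoc', div_eq_div_iff (mul_ne_zero hden' (by norm_num)) (by norm_num)]
      ring
    rw [h4] at h3
    have hdet : (β0*(1-φ0)^2 + 2*ζ*β0*φ0^2 - γ) * (2*β0*φ0^2 + ζ*β0*(1-2*φ0)^2 - γ)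
        - 2*(β0*(1-φ0)*φ0 + ζ*β0*φ0*(1-2*φ0))^2 < 0 := by nlinarith [h3]
    exact ⟨_, star3_spec β0 ζ γ φ0, mu_pos hdet⟩
  · -- part (ii)
    intro hz φ0 hp0 hp2
    rw [e, div_le_iff₀ hβ0] at hz
    have hX : 3*γ - 2*β0 - β0*ζ ≤ 0 := by nlinarith
    have hdet : (β0*(1-φ0)^2 + 2*ζ*β0*φ0^2 - γ) * (2*β0*φ0^2 + ζ*β0*(1-2*φ0)^2 - γ)
        - 2*(β0*(1-φ0)*φ0 + ζ*β0*φ0*(1-2*φ0))^2 ≤ 0 := by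
      have hd2 : (φ0 - 1/3)^2 ≤ 1/9 := by nlinarith
      rcases le_or_gt 0 (3*β0*(3*β0*ζ - γ - 2*γ*ζ)) with hL | hL
      · nlinarith [mul_nonneg hL (by linarith : (0:ℝ) ≤ 1/9 - (φ0-1/3)^2),
          mul_pos (by linarith : (0:ℝ) < γ - β0) (by linarith : (0:ℝ) < ζ*β0 - γ)]
      · nlinarith [mul_nonpos_of_nonpos_of_nonneg (le_of_lt hL) (sq_nonneg (φ0-1/3)),
          mul_nonneg (le_of_lt hγ) (neg_nonneg.mpr hX)]
    exact ⟨_, star3_spec β0 ζ γ φ0, mu_nonneg hdet⟩
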